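/- Let (S_1, …, S_{n+1}) be an exchangeable sequence of random variables with values in the extended real line [−∞, +∞], and let k be an integer with 1 ≤ k ≤ n+1. Then P(S_{n+1} ≤ OS_k(S_1, …, S_{n+1})) ≥ k / (n+1), where OS_k(S_1, …, S_{n+1}) denotes the k-th smallest value of the multiset {S_1, …, S_{n+1}} (a random variable). This bound holds regardless of whether ties exist among the scores. -/

import Mathlib

open MeasureTheory

/-- A finite sequence of random variables `Z : Fin m → Ω → α` is exchangeable
(w.r.t. the probability measure `μ`) if for every permutation `σ` of `Fin m`,
the joint law of the permuted sequence equals the joint law of the original one. -/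
def Exchangeable {Ω α : Type*} [MeasurableSpace Ω] [MeasurableSpace α] {m : ℕ}
    (μ : Measure Ω) (Z : Fin m → Ω → α) : Prop :=
  ∀ σ : Equiv.Perm (Fin m),
    Measure.map (fun ω => fun i => Z (σ i) ω) μ = Measure.map (fun ω => fun i => Z i ω) μ

/-- The `k`-th order statistic (0-indexed: `k : Fin m` gives the `(k+1)`-th smallest
element, counted with multiplicity) of the values `s 0, …, s (m-1)`. -/
noncomputable def orderStat {α : Type*} [LinearOrder α] {m : ℕ}
    (s : Fin m → α) (k : Fin m) : α :=
  s (Tuple.sort s k)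


section Helpers
open Finset
variable {α : Type*} [LinearOrder α] {m : ℕ}

theorem orderStat_comp_perm (s : Fin m → α) (σ : Equiv.Perm (Fin m)) (c : Fin m) :
    orderStat (s ∘ σ) c = orderStat s c := by
  have := congrFun (Tuple.comp_perm_comp_sort_eq_comp_sort (f := s) (σ := σ)) c
  simpa [orderStat] using this

theorem le_orderStat_iff (s : Fin m → α) (i c : Fin m) :
    s i ≤ orderStat s c ↔ #(univ.filter fun j => s j < s i) ≤ (c : ℕ) := by
  set τ := Tuple.sort s with hτ
  have hmono : Monotone (s ∘ τ) := Tuple.monotone_sort s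
  constructor
  · intro h
    have hinj : Set.InjOn (τ.symm) (univ.filter fun j => s j < s i) :=
      (τ.symm).injective.injOn
    have hsub : (univ.filter fun j => s j < s i).image τ.symm ⊆ Finset.Iio c := by
      intro x hx
      simp only [mem_image, mem_filter] at hx
      obtain ⟨j, ⟨-, hj⟩, rfl⟩ := hx
      rw [Finset.mem_Iio]
      by_contra hcon
      push_neg at hcon
      have := hmono hcon
      simp only [Function.comp_apply, Equiv.apply_symm_apply] at this
      exact absurd (lt_of_lt_of_le hj h) (not_lt.2 this)
    calc #(univ.filter fun j => s j < s i)
        = #((univ.filter fun j => s j < s i).image τ.symm) :=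
          (Finset.card_image_of_injective _ τ.symm.injective).symm
      _ ≤ #(Finset.Iio c) := Finset.card_le_card hsub
      _ = (c : ℕ) := Fin.card_Iio c
  · intro h
    by_contra hcon
    push_neg at hcon
    have hsub : (Finset.Iic c).image τ ⊆ univ.filter fun j => s j < s i := by
      intro x hx
      simp only [mem_image, Finset.mem_Iic] at hx
      obtain ⟨m', hm', rfl⟩ := hx
      simp only [mem_filter, mem_univ, true_and]
      exact lt_of_le_of_lt (hmono hm') hcon
    have := Finset.card_le_card hsub
    rw [Finset.card_image_of_injective _ τ.injective, Fin.card_Iic] at this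
    omega

theorem card_le_orderStat (s : Fin m → α) (c : Fin m) :
    (c : ℕ) + 1 ≤ #(univ.filter fun i => s i ≤ orderStat s c) := by
  set τ := Tuple.sort s with hτ
  have hmono : Monotone (s ∘ τ) := Tuple.monotone_sort s
  have hsub : (Finset.Iic c).image τ ⊆ univ.filter fun i => s i ≤ orderStat s c := by
    intro x hx
    simp only [mem_image, Finset.mem_Iic] at hx
    obtain ⟨m', hm', rfl⟩ := hx
    simp only [mem_filter, mem_univ, true_and]
    exact hmono hm'
  have := Finset.card_le_card hsub
  rwa [Finset.card_image_of_injective _ τ.injective, Fin.card_Iic] at this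

theorem measurableSet_le_orderStat (i c : Fin m) :
    MeasurableSet {s : Fin m → EReal | s i ≤ orderStat s c} := by
  have : {s : Fin m → EReal | s i ≤ orderStat s c}
      = (fun s : Fin m → EReal => #(univ.filter fun j => s j < s i)) ⁻¹' (Set.Iic (c : ℕ)) := by
    ext s; simp [le_orderStat_iff]
  rw [this]
  have hmeas : Measurable (fun s : Fin m → EReal => #(univ.filter fun j => s j < s i)) := by
    simp only [Finset.card_filter]
    exact Finset.measurable_sum _ fun j _ =>
      Measurable.ite (measurableSet_lt (measurable_pi_apply j) (measurable_pi_apply i))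
        measurable_const measurable_const
  exact hmeas (by trivial)

end Helpers

/-- Rank coverage under exchangeability: for an exchangeable sequence
`(S 1, …, S (n+1))` of extended-real random variables and `1 ≤ k ≤ n+1`, the last
score is at or below the `k`-th order statistic of all `n+1` scores with probability
at least `k / (n+1)`, regardless of ties. -/
theorem prob_last_le_orderStat
    {Ω : Type*} [MeasurableSpace Ω] {n : ℕ}
    (μ : Measure Ω) [IsProbabilityMeasure μ]
    (S : Fin (n + 1) → Ω → EReal) (hSmeas : ∀ i, Measurable (S i))
    (hexch : Exchangeable μ S)
    (k : ℕ) (hk1 : 1 ≤ k) (hk2 : k ≤ n + 1) :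
    (k : ENNReal) / (n + 1) ≤
      μ {ω | S (Fin.last n) ω ≤ orderStat (fun i => S i ω) ⟨k - 1, by omega⟩} := by
  set c : Fin (n + 1) := ⟨k - 1, by omega⟩ with hc
  set F : Ω → (Fin (n + 1) → EReal) := fun ω i => S i ω with hF
  have hFmeas : Measurable F := measurable_pi_lambda _ hSmeas
  set B : Fin (n + 1) → Set (Fin (n + 1) → EReal) :=
    fun i => {s | s i ≤ orderStat s c} with hBdef
  have hB : ∀ i, MeasurableSet (B i) := fun i => measurableSet_le_orderStat i c
  set A : Fin (n + 1) → Set Ω := fun i => F ⁻¹' B i with hAdef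
  have hA : ∀ i, MeasurableSet (A i) := fun i => hFmeas (hB i)
  -- invariance
  have hinv : ∀ i, μ (A (Fin.last n)) = μ (A i) := by
    intro i
    set σ := Equiv.swap i (Fin.last n) with hσ
    have hpre : (fun s : Fin (n+1) → EReal => s ∘ σ) ⁻¹' B i = B (Fin.last n) := by
      ext s
      simp only [B, Set.mem_preimage, Set.mem_setOf_eq, Function.comp_apply,
        orderStat_comp_perm, hσ, Equiv.swap_apply_left]
    have hGmeas : Measurable (fun ω => fun j => S (σ j) ω) :=
      measurable_pi_lambda _ fun j => hSmeas (σ j)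
    have h1 : (fun ω => fun j => S (σ j) ω) ⁻¹' B i = A (Fin.last n) := by
      show _ = F ⁻¹' B (Fin.last n)
      rw [← hpre]
      rfl
    calc μ (A (Fin.last n)) = μ ((fun ω => fun j => S (σ j) ω) ⁻¹' B i) := by rw [h1]
      _ = (Measure.map (fun ω => fun j => S (σ j) ω) μ) (B i) :=
          (Measure.map_apply hGmeas (hB i)).symm
      _ = (Measure.map (fun ω => fun i => S i ω) μ) (B i) := by rw [hexch σ]
      _ = μ (A i) := Measure.map_apply hFmeas (hB i)
  -- sum lower bound
  have hcount : ∀ ω, (k : ENNReal) ≤ ∑ i, (A i).indicator (1 : Ω → ENNReal) ω := by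
    intro ω
    have hge := card_le_orderStat (F ω) c
    have hcc : (c : ℕ) + 1 = k := by simp [hc]; omega
    rw [hcc] at hge
    have : ∑ i, (A i).indicator (1 : Ω → ENNReal) ω
        = ((Finset.univ.filter fun i => F ω i ≤ orderStat (F ω) c).card) := by
      rw [Finset.card_filter]
      push_cast
      refine Finset.sum_congr rfl fun i _ => ?_
      by_cases h : F ω i ≤ orderStat (F ω) c
      · simp [Set.indicator, A, B, Set.mem_setOf_eq, h]
      · simp [Set.indicator, A, B, Set.mem_setOf_eq, h]
    rw [this]
    exact_mod_cast Nat.cast_le.mpr hge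
  have hsum : (k : ENNReal) ≤ ∑ i, μ (A i) := by
    have h1 : (k : ENNReal) = ∫⁻ _, (k : ENNReal) ∂μ := by
      simp [lintegral_const]
    have h2 : ∫⁻ ω, (k : ENNReal) ∂μ ≤ ∫⁻ ω, ∑ i, (A i).indicator (1 : Ω → ENNReal) ω ∂μ :=
      lintegral_mono fun ω => hcount ω
    have h3 : ∫⁻ ω, ∑ i, (A i).indicator (1 : Ω → ENNReal) ω ∂μ = ∑ i, μ (A i) := by
      rw [lintegral_finset_sum _ fun i _ => (measurable_one.indicator (hA i))]
      refine Finset.sum_congr rfl fun i _ => ?_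
      rw [lintegral_indicator (hA i)]
      simp
    rw [h1]; rw [← h3]; exact h2
  have hfinal : (k : ENNReal) ≤ ((n : ENNReal) + 1) * μ (A (Fin.last n)) := by
    calc (k : ENNReal) ≤ ∑ i, μ (A i) := hsum
      _ = ∑ _i : Fin (n+1), μ (A (Fin.last n)) := by
          exact Finset.sum_congr rfl fun i _ => (hinv i).symm
      _ = ((n : ENNReal) + 1) * μ (A (Fin.last n)) := by
          rw [Finset.sum_const, Finset.card_univ, Fintype.card_fin]
          ring
  have := ENNReal.div_le_of_le_mul' hfinal
  convert this using 2
  rfl
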